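/- arXiv:1911.11837 — 2 statements merged into one kernel-verified Lean document; each statement's English description precedes it below -/
import Mathlib

section
/- If a data subcomplex satisfies the strong join condition, then it is closed under permutations: for any (T, τ) in the subcomplex and any permutation ς of the index set of T, the correspondingly permuted data table (T∘ς, ς·τ) also lies in the subcomplex. -/
open MeasureTheory
open scoped ENNReal

variable (A : Type*) (Val : A → Type*) [∀ a, MeasurableSpace (Val a)]

/-- A data table: a finite attribute list `T : Fin n → A` together with a measure on the
product of the corresponding value spaces.  (The level `n` is the length of the list;
`n = 0` is the empty list, whose value space is a singleton.) -/
def DT : Type _ := Σ n : ℕ, Σ T : Fin n → A, Measure (∀ k, Val (T k))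

/-- Face map `d_i`: delete the `i`-th attribute and marginalize the measure. -/
noncomputable def face {n : ℕ} (T : Fin (n+1) → A) (i : Fin (n+1))
    (τ : Measure (∀ k, Val (T k))) : Measure (∀ k : Fin n, Val (T (i.succAbove k))) :=
  τ.map fun x k => x (i.succAbove k)

/-- Degeneracy map `s_i`: repeat the `i`-th attribute and push the measure forward along
the diagonal duplication (Dirac diagonal). -/
noncomputable def degen {n : ℕ} (T : Fin n → A) (i : Fin n)
    (τ : Measure (∀ k, Val (T k))) : Measure (∀ k : Fin (n+1), Val (T (i.predAbove k))) :=
  τ.map fun x k => x (i.predAbove k)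

/-- Reduction (marginalization) along an attribute inclusion `ι`. -/
noncomputable def red {m n : ℕ} (T : Fin n → A) (ι : Fin m → Fin n)
    (τ : Measure (∀ k, Val (T k))) : Measure (∀ k : Fin m, Val (T (ι k))) :=
  τ.map fun x k => x (ι k)

/-- A data subcomplex: a collection of data tables closed under the face
(marginalization) and degeneracy (diagonal) maps. -/
def IsSubcomplex (S : Set (DT A Val)) : Prop :=
  (∀ (n : ℕ) (T : Fin (n+1) → A) (τ : Measure (∀ k, Val (T k))) (i : Fin (n+1)),
      ⟨n+1, T, τ⟩ ∈ S → ⟨n, T ∘ i.succAbove, face A Val T i τ⟩ ∈ S) ∧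
  (∀ (n : ℕ) (T : Fin n → A) (τ : Measure (∀ k, Val (T k))) (i : Fin n),
      ⟨n, T, τ⟩ ∈ S → ⟨n+1, T ∘ i.predAbove, degen A Val T i τ⟩ ∈ S)

/-- The combinatorial data of a merge of two attribute inclusions
`ι01 : T₀ ↪ T₀₁`, `ι02 : T₀ ↪ T₀₂` into a common list of length `n012`: order-preserving
inclusions of the two lists whose images cover the merged index set, agree on the common
sublist, and overlap exactly in it. -/
structure MergeTop (n0 n01 n02 n012 : ℕ)
    (ι01 : Fin n0 → Fin n01) (ι02 : Fin n0 → Fin n02) : Type where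
  μ01 : Fin n01 → Fin n012
  μ02 : Fin n02 → Fin n012
  mono01 : StrictMono μ01
  mono02 : StrictMono μ02
  comm : μ01 ∘ ι01 = μ02 ∘ ι02
  cover : Set.range μ01 ∪ Set.range μ02 = Set.univ
  inter : Set.range μ01 ∩ Set.range μ02 = Set.range (μ01 ∘ ι01)

/-- The strong join condition: for every pair of member tables that are well-aligned along
a common sublist (their reductions to it agree), *every* join of them — every measure on a
merged list reducing to the two given measures — is again a member. -/
def StrongJoinCondition (S : Set (DT A Val)) : Prop :=
  ∀ {n0 n01 n02 n012 : ℕ} (ι01 : Fin n0 → Fin n01) (ι02 : Fin n0 → Fin n02),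
    StrictMono ι01 → StrictMono ι02 →
    ∀ (M : MergeTop n0 n01 n02 n012 ι01 ι02) (T012 : Fin n012 → A)
      (τ01 : Measure (∀ k : Fin n01, Val (T012 (M.μ01 k))))
      (τ02 : Measure (∀ k : Fin n02, Val (T012 (M.μ02 k)))),
      ⟨n01, T012 ∘ M.μ01, τ01⟩ ∈ S → ⟨n02, T012 ∘ M.μ02, τ02⟩ ∈ S →
      HEq (red A Val (T012 ∘ M.μ01) ι01 τ01) (red A Val (T012 ∘ M.μ02) ι02 τ02) →
      ∀ τ012 : Measure (∀ k, Val (T012 k)),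
        red A Val T012 M.μ01 τ012 = τ01 → red A Val T012 M.μ02 τ012 = τ02 →
        ⟨n012, T012, τ012⟩ ∈ S

/-! ### Auxiliary material for the proof -/

lemma pick_measurable {l n : ℕ} (T : Fin n → A) (g : Fin l → Fin n) :
    Measurable fun (x : ∀ k, Val (T k)) (k : Fin l) => x (g k) :=
  measurable_pi_lambda _ fun k => measurable_pi_apply _

lemma red_univ {l n : ℕ} (T : Fin n → A) (g : Fin l → Fin n)
    (τ : Measure (∀ k, Val (T k))) : red A Val T g τ Set.univ = τ Set.univ := by
  rw [red, Measure.map_apply (pick_measurable A Val T g) MeasurableSet.univ,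
    Set.preimage_univ]

lemma red_comp {l m n : ℕ} (T : Fin n → A) (f : Fin m → Fin n) (g : Fin l → Fin m)
    (τ : Measure (∀ k, Val (T k))) :
    red A Val (T ∘ f) g (red A Val T f τ) = red A Val T (f ∘ g) τ := by
  rw [red, red, red,
    Measure.map_map (pick_measurable A Val (T ∘ f) g) (pick_measurable A Val T f)]
  rfl

lemma red_id {n : ℕ} (T : Fin n → A) (τ : Measure (∀ k, Val (T k))) :
    red A Val T id τ = τ := by
  rw [red]; exact Measure.map_id

lemma red_congr {l n : ℕ} (T : Fin n → A) {f g : Fin l → Fin n} (h : f = g)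
    (τ : Measure (∀ k, Val (T k))) : HEq (red A Val T f τ) (red A Val T g τ) := by
  subst h; rfl

lemma mem_heq (S : Set (DT A Val)) {n : ℕ} {T T' : Fin n → A}
    {τ : Measure (∀ k, Val (T k))} {τ' : Measure (∀ k, Val (T' k))}
    (hT : T = T') (hτ : HEq τ τ')
    (h : (⟨n, T, τ⟩ : DT A Val) ∈ S) : (⟨n, T', τ'⟩ : DT A Val) ∈ S := by
  subst hT; obtain rfl := eq_of_heq hτ; exact h

lemma measure_unique_eq {α : Type*} [MeasurableSpace α] [Unique α]
    (μ ν : Measure α) (h : μ Set.univ = ν Set.univ) : μ = ν := by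
  ext s _
  rcases s.eq_empty_or_nonempty with rfl | ⟨y, hy⟩
  · simp
  · have hs : s = Set.univ := Set.eq_univ_of_forall fun x => by
      rwa [Subsingleton.elim x y]
    rw [hs]; exact h

lemma heq_measure_pi0 {F G : Fin 0 → A} (h : F = G)
    (μ : Measure (∀ k, Val (F k))) (ν : Measure (∀ k, Val (G k)))
    (hm : μ Set.univ = ν Set.univ) : HEq μ ν := by
  subst h; exact heq_of_eq (measure_unique_eq μ ν hm)

lemma red_elim0_heq {n1 n2 : ℕ} (T1 : Fin n1 → A) (T2 : Fin n2 → A)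
    (σ1 : Measure (∀ k, Val (T1 k))) (σ2 : Measure (∀ k, Val (T2 k)))
    (h : σ1 Set.univ = σ2 Set.univ) :
    HEq (red A Val T1 Fin.elim0 σ1) (red A Val T2 Fin.elim0 σ2) := by
  refine heq_measure_pi0 A Val (funext fun k => k.elim0) _ _ ?_
  rw [red_univ, red_univ, h]

lemma le_apply_of_strictMono {N : ℕ} {f : Fin N → Fin N} (hf : StrictMono f) :
    ∀ k : Fin N, (k : ℕ) ≤ ((f k : Fin N) : ℕ) := by
  have H : ∀ v : ℕ, ∀ k : Fin N, (k : ℕ) = v → v ≤ ((f k : Fin N) : ℕ) := by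
    intro v
    induction v with
    | zero => intro k _; exact Nat.zero_le _
    | succ v ih =>
      intro k hk
      have hvN : v < N := by have := k.isLt; omega
      have h1 := ih ⟨v, hvN⟩ rfl
      have h2 : (⟨v, hvN⟩ : Fin N) < k := by rw [Fin.lt_def]; simp; omega
      have h3 := hf h2
      rw [Fin.lt_def] at h3
      omega
  exact fun k => H (k : ℕ) k rfl

/-- Iterated faces: membership is preserved by marginalizing along any strictly
monotone map. -/
lemma red_mem (S : Set (DT A Val)) (hsub : IsSubcomplex A Val S) :
    ∀ (m l : ℕ) (p : Fin l → Fin m), StrictMono p →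
      ∀ (T : Fin m → A) (τ : Measure (∀ k, Val (T k))),
        (⟨m, T, τ⟩ : DT A Val) ∈ S → (⟨l, T ∘ p, red A Val T p τ⟩ : DT A Val) ∈ S := by
  intro m
  induction m with
  | zero =>
    intro l p hp T τ h
    have hl : l = 0 := by
      cases l with
      | zero => rfl
      | succ l' => exact (p 0).elim0
    subst hl
    have hp0 : p = id := funext fun k => k.elim0
    subst hp0
    exact mem_heq A Val S rfl ((heq_of_eq (red_id A Val T τ)).symm) h
  | succ m ih =>
    intro l p hp T τ h
    by_cases hl : l = m + 1
    · subst hl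
      have hps : Function.Surjective p :=
        Finite.injective_iff_surjective.mp hp.injective
      have hbij : Function.Bijective p := ⟨hp.injective, hps⟩
      have e1 : ∀ x, p ((Equiv.ofBijective p hbij).symm x) = x := fun x =>
        (Equiv.ofBijective p hbij).apply_symm_apply x
      have hsm : StrictMono (Equiv.ofBijective p hbij).symm := by
        intro a b hab
        by_contra hle
        push_neg at hle
        have h2 := hp.monotone hle
        rw [e1, e1] at h2
        exact absurd h2 (not_le.mpr hab)
      have hpid : p = id := by
        funext k
        have h1 := le_apply_of_strictMono hp k
        have h4 := le_apply_of_strictMono hsm k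
        have h5 : p k ≤ p ((Equiv.ofBijective p hbij).symm k) :=
          hp.monotone (by rw [Fin.le_def]; exact h4)
        rw [e1] at h5
        exact le_antisymm h5 (by rw [Fin.le_def]; exact h1)
      subst hpid
      exact mem_heq A Val S rfl ((heq_of_eq (red_id A Val T τ)).symm) h
    · have hcard : l ≤ m + 1 := by
        simpa using Fintype.card_le_of_injective p hp.injective
      have hns : ¬ Function.Surjective p := by
        intro hs
        have := Fintype.card_le_of_surjective p hs
        simp only [Fintype.card_fin] at this
        omega
      rw [Function.Surjective] at hns
      push_neg at hns
      obtain ⟨i, hi⟩ := hns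
      choose q hq using fun k => Fin.exists_succAbove_eq (hi k)
      have hqm : StrictMono q := by
        intro a b hab
        have h2 := hp hab
        rw [← hq a, ← hq b] at h2
        exact Fin.succAbove_lt_succAbove_iff.mp h2
      have h1 : (⟨m, T ∘ i.succAbove, face A Val T i τ⟩ : DT A Val) ∈ S :=
        hsub.1 m T τ i h
      have h2 := ih l q hqm (T ∘ i.succAbove) (face A Val T i τ) h1
      refine mem_heq A Val S ?_ ?_ h2
      · exact funext fun k => congrArg T (hq k)
      · exact (heq_of_eq (red_comp A Val T i.succAbove q τ)).trans
          (red_congr A Val T (funext hq) τ)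

/-- The doubling index map `Fin (n + n) → Fin n`. -/
def dbl (n : ℕ) : Fin (n + n) → Fin n := fun j =>
  if h : (j : ℕ) < n then ⟨j, h⟩ else ⟨(j : ℕ) - n, by have := j.isLt; omega⟩

lemma dbl_castAdd (n : ℕ) (k : Fin n) : dbl n (Fin.castAdd n k) = k := by
  simp [dbl, Fin.ext_iff]

lemma dbl_natAdd (n : ℕ) (k : Fin n) : dbl n (Fin.natAdd n k) = k := by
  simp [dbl, Fin.ext_iff]

/-- Self-join: the diagonal doubling of a member table is a member, via the strong
join condition with empty overlap. -/
lemma self_join (S : Set (DT A Val)) (hstrong : StrongJoinCondition A Val S)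
    {n : ℕ} (T : Fin n → A) (τ : Measure (∀ k, Val (T k)))
    (h : (⟨n, T, τ⟩ : DT A Val) ∈ S) :
    (⟨n + n, T ∘ dbl n, red A Val T (dbl n) τ⟩ : DT A Val) ∈ S := by
  have hmono0 : StrictMono (Fin.elim0 : Fin 0 → Fin n) := fun a => a.elim0
  let M : MergeTop 0 n n (n + n) (Fin.elim0 : Fin 0 → Fin n) Fin.elim0 :=
    { μ01 := Fin.castAdd n
      μ02 := Fin.natAdd n
      mono01 := Fin.strictMono_castAdd n
      mono02 := Fin.strictMono_natAdd n
      comm := funext fun k => k.elim0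
      cover := by
        ext j
        simp only [Set.mem_union, Set.mem_range, Set.mem_univ, iff_true]
        by_cases hj : (j : ℕ) < n
        · exact Or.inl ⟨⟨j, hj⟩, by simp [Fin.ext_iff]⟩
        · refine Or.inr ⟨⟨(j : ℕ) - n, by have := j.isLt; omega⟩, ?_⟩
          have := j.isLt
          simp only [Fin.ext_iff, Fin.coe_natAdd]
          omega
      inter := by
        have : Set.range ((Fin.castAdd n : Fin n → Fin (n + n)) ∘
            (Fin.elim0 : Fin 0 → Fin n)) = ∅ := Set.range_eq_empty _
        rw [this, Set.eq_empty_iff_forall_notMem]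
        rintro j ⟨⟨a, ha⟩, ⟨b, hb⟩⟩
        have h1 : ((Fin.castAdd n a : Fin (n + n)) : ℕ) = (j : ℕ) := by rw [ha]
        have h2 : ((Fin.natAdd n b : Fin (n + n)) : ℕ) = (j : ℕ) := by rw [hb]
        simp only [Fin.coe_castAdd, Fin.coe_natAdd] at h1 h2
        have := a.isLt
        omega }
  have e1 : dbl n ∘ Fin.castAdd n = id := funext fun k => dbl_castAdd n k
  have e2 : dbl n ∘ Fin.natAdd n = id := funext fun k => dbl_natAdd n k
  refine hstrong Fin.elim0 Fin.elim0 hmono0 hmono0 M (T ∘ dbl n)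
    (red A Val (T ∘ dbl n) M.μ01 (red A Val T (dbl n) τ))
    (red A Val (T ∘ dbl n) M.μ02 (red A Val T (dbl n) τ))
    ?_ ?_ ?_ (red A Val T (dbl n) τ) rfl rfl
  · refine mem_heq A Val S (funext fun k => congrArg T (dbl_castAdd n k).symm) ?_ h
    exact ((heq_of_eq (red_id A Val T τ)).symm).trans
      ((red_congr A Val T e1.symm τ).trans
        (heq_of_eq (red_comp A Val T (dbl n) (Fin.castAdd n) τ).symm))
  · refine mem_heq A Val S (funext fun k => congrArg T (dbl_natAdd n k).symm) ?_ h
    exact ((heq_of_eq (red_id A Val T τ)).symm).trans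
      ((red_congr A Val T e2.symm τ).trans
        (heq_of_eq (red_comp A Val T (dbl n) (Fin.natAdd n) τ).symm))
  · refine red_elim0_heq A Val _ _ _ _ ?_
    exact (red_univ A Val (T ∘ dbl n) M.μ01 _).trans
      (red_univ A Val (T ∘ dbl n) M.μ02 _).symm

/-- Lengths of iterated doublings. -/
def Dl (n : ℕ) : ℕ → ℕ
  | 0 => n
  | m + 1 => Dl n m + Dl n m

/-- The iterated doubling index map. -/
def cm (n : ℕ) : (m : ℕ) → Fin (Dl n m) → Fin n
  | 0 => id
  | m + 1 => cm n m ∘ dbl (Dl n m)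

lemma Dl_dvd (n : ℕ) : ∀ m, n ∣ Dl n m
  | 0 => dvd_refl n
  | m + 1 => dvd_add (Dl_dvd n m) (Dl_dvd n m)

lemma Dl_eq (n : ℕ) : ∀ m, Dl n m = 2 ^ m * n
  | 0 => by simp [Dl]
  | m + 1 => by
    have := Dl_eq n m
    simp only [Dl, this, pow_succ]
    ring

lemma cm_val (n : ℕ) : ∀ (m : ℕ) (j : Fin (Dl n m)), ((cm n m j : Fin n) : ℕ) = (j : ℕ) % n
  | 0, j => (Nat.mod_eq_of_lt j.isLt).symm
  | m + 1, j => by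
    show ((cm n m (dbl (Dl n m) j) : Fin n) : ℕ) = (j : ℕ) % n
    rw [cm_val n m]
    obtain ⟨c, hc⟩ := Dl_dvd n m
    simp only [dbl]
    split_ifs with hj
    · rfl
    · have hjlt := j.isLt
      have hD : Dl n (m + 1) = Dl n m + Dl n m := rfl
      rw [Nat.mul_comm] at hc
      conv_rhs => rw [show (j : ℕ) = ((j : ℕ) - Dl n m) + c * n by omega]
      rw [Nat.add_mul_mod_self_right]


/- STATEMENT 9: if a data subcomplex satisfies the strong join condition, then it is
closed under permutations: for any (T, τ) in the subcomplex and any permutation ς of the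
index set of T, the permuted data table (T∘ς, ς·τ) — with ς·τ the pushforward of τ under
the coordinate permutation — also lies in the subcomplex. -/

theorem strong_join_closed_under_permutation
    [Fintype A] [∀ a, MetricSpace (Val a)] [∀ a, CompactSpace (Val a)]
    [∀ a, BorelSpace (Val a)]
    (S : Set (DT A Val)) (hsub : IsSubcomplex A Val S)
    (hfin : ∀ x ∈ S, IsFiniteMeasure x.2.2)
    (hstrong : StrongJoinCondition A Val S) :
    ∀ (n : ℕ) (T : Fin n → A) (τ : Measure (∀ k, Val (T k))),
      ⟨n, T, τ⟩ ∈ S → ∀ ς : Equiv.Perm (Fin n),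
        ⟨n, T ∘ ς, τ.map fun x k => x (ς k)⟩ ∈ S := by
  intro n T τ h ς
  have hdiag : ∀ m, (⟨Dl n m, T ∘ cm n m, red A Val T (cm n m) τ⟩ : DT A Val) ∈ S := by
    intro m
    induction m with
    | zero => exact mem_heq A Val S rfl ((heq_of_eq (red_id A Val T τ)).symm) h
    | succ m ihm =>
      have hsj := self_join A Val S hstrong (T ∘ cm n m) (red A Val T (cm n m) τ) ihm
      exact mem_heq A Val S rfl
        (heq_of_eq (red_comp A Val T (cm n m) (dbl (Dl n m)) τ)) hsj
  have h2n : n ≤ 2 ^ n := (Nat.lt_two_pow_self (n := n)).le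
  have hbound : ∀ k : Fin n, (k : ℕ) * n + ((ς k : Fin n) : ℕ) < Dl n n := by
    intro k
    rw [Dl_eq]
    have h1 := (ς k).isLt
    have hk := k.isLt
    nlinarith
  set p : Fin n → Fin (Dl n n) := fun k => ⟨(k : ℕ) * n + ((ς k : Fin n) : ℕ), hbound k⟩
    with hp_def
  have hp : StrictMono p := by
    intro a b hab
    have hab' : (a : ℕ) < (b : ℕ) := hab
    have h1 := (ς a).isLt
    have h2 : ((a : ℕ) + 1) * n ≤ (b : ℕ) * n := Nat.mul_le_mul_right n hab'
    simp only [hp_def, Fin.mk_lt_mk]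
    nlinarith
  have hmem := red_mem A Val S hsub (Dl n n) n p hp (T ∘ cm n n)
    (red A Val T (cm n n) τ) (hdiag n)
  have hc : cm n n ∘ p = ⇑ς := by
    funext k
    refine Fin.ext ?_
    show ((cm n n (p k) : Fin n) : ℕ) = ((ς k : Fin n) : ℕ)
    rw [cm_val]
    show ((k : ℕ) * n + ((ς k : Fin n) : ℕ)) % n = _
    rw [Nat.mul_add_mod', Nat.mod_eq_of_lt (ς k).isLt]
  refine mem_heq A Val S ?_ ?_ hmem
  · exact funext fun k => congrArg T (congrFun hc k)
  · exact (heq_of_eq (red_comp A Val T (cm n n) p τ)).trans (red_congr A Val T hc τ)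
end

section
/- The complex of perfect joins F⁰ of any data subcomplex 𝒮 is closed under faces and degeneracies and satisfies the strong join condition (is fibrant). -/
open MeasureTheory
open scoped ENNReal

variable (A : Type*) (Val : A → Type*) [∀ a, MeasurableSpace (Val a)]

/-- The complex of perfect joins F⁰ of a data subcomplex `S`: all tables `(T,τ)` such
that every entry of `T` is contained in some sublist `S' ↪ T` for which the reduction of
`τ` to `S'` is a member of `S`. -/
def PerfectJoins (S : Set (DT A Val)) : Set (DT A Val) :=
  {x | ∀ i : Fin x.1, ∃ (m : ℕ) (ι : Fin m → Fin x.1),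
        StrictMono ι ∧ i ∈ Set.range ι ∧
        ⟨m, x.2.1 ∘ ι, red A Val x.2.1 ι x.2.2⟩ ∈ S}


section Aux

variable (A : Type*) (Val : A → Type*) [∀ a, MeasurableSpace (Val a)]

lemma red_red {p q r : ℕ} (T : Fin r → A) (f : Fin q → Fin r) (g : Fin p → Fin q)
    (τ : Measure (∀ k, Val (T k))) :
    red A Val (T ∘ f) g (red A Val T f τ) = red A Val T (f ∘ g) τ := by
  unfold red
  rw [Measure.map_map]
  · rfl
  · exact measurable_pi_lambda _ fun k => measurable_pi_apply _
  · exact measurable_pi_lambda _ fun k => measurable_pi_apply _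

lemma dt_congr {p q : ℕ} (T : Fin q → A) (f g : Fin p → Fin q) (h : f = g)
    (τ : Measure (∀ k, Val (T k))) :
    (⟨p, T ∘ f, red A Val T f τ⟩ : DT A Val) = ⟨p, T ∘ g, red A Val T g τ⟩ := by
  subst h; rfl

lemma predAbove_succ_succAbove {n : ℕ} (i : Fin n) (j : Fin n) :
    i.predAbove (i.succ.succAbove j) = j := by
  rcases le_or_gt j i with h | h
  · rw [Fin.succAbove_succ_of_le _ _ h, Fin.predAbove_castSucc_of_le _ _ h]
  · rw [Fin.succAbove_succ_of_lt _ _ h, Fin.predAbove_succ_of_le _ _ h.le]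

lemma face_factor (S : Set (DT A Val)) {n m : ℕ} (T : Fin (n+1) → A)
    (τ : Measure (∀ k, Val (T k))) (i : Fin (n+1)) (g : Fin m → Fin (n+1))
    (hg : StrictMono g) (hgi : ∀ a, g a ≠ i)
    (hS : (⟨m, T ∘ g, red A Val T g τ⟩ : DT A Val) ∈ S) (k : Fin n)
    (hk : i.succAbove k ∈ Set.range g) :
    ∃ (m' : ℕ) (ι : Fin m' → Fin n), StrictMono ι ∧ k ∈ Set.range ι ∧
      (⟨m', (T ∘ i.succAbove) ∘ ι,
        red A Val (T ∘ i.succAbove) ι (red A Val T i.succAbove τ)⟩ : DT A Val) ∈ S := by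
  have hcc : ∀ a, ∃ z, i.succAbove z = g a := fun a => Fin.exists_succAbove_eq (hgi a)
  choose ι' hι' using hcc
  have hcomp : i.succAbove ∘ ι' = g := funext hι'
  refine ⟨m, ι', ?_, ?_, ?_⟩
  · intro a b hab
    have h2 := hg hab
    rw [← hι' a, ← hι' b] at h2
    exact Fin.succAbove_lt_succAbove_iff.mp h2
  · obtain ⟨l, hl⟩ := hk
    exact ⟨l, Fin.succAbove_right_injective (by rw [hι' l, hl])⟩
  · refine Set.mem_of_eq_of_mem ?_ hS
    refine Eq.trans (congrArg
      (fun μ => (⟨m, T ∘ (i.succAbove ∘ ι'), μ⟩ : DT A Val))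
      (red_red A Val T i.succAbove ι' τ)) ?_
    exact dt_congr A Val T (i.succAbove ∘ ι') g hcomp τ

end Aux

/- STATEMENT 14: the complex of perfect joins F⁰ of any data subcomplex 𝒮 is itself a
data subcomplex (closed under faces and degeneracies) and satisfies the strong join
condition (is fibrant). -/

theorem perfect_joins_fibrant
    [Fintype A] [∀ a, MetricSpace (Val a)] [∀ a, CompactSpace (Val a)]
    [∀ a, BorelSpace (Val a)]
    (S : Set (DT A Val)) (hsub : IsSubcomplex A Val S)
    (hfin : ∀ x ∈ S, IsFiniteMeasure x.2.2) :
    IsSubcomplex A Val (PerfectJoins A Val S) ∧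
    StrongJoinCondition A Val (PerfectJoins A Val S) := by
  refine ⟨⟨?_, ?_⟩, ?_⟩
  · -- closed under faces
    intro n T τ i hmem k
    obtain ⟨m, ι, hι, ⟨l, hl⟩, hS⟩ := hmem (i.succAbove k)
    by_cases hi : ∃ a, ι a = i
    · obtain ⟨lm, hlm⟩ := hi
      cases m with
      | zero => exact lm.elim0
      | succ m' =>
        have hface := hsub.1 m' (T ∘ ι) (red A Val T ι τ) lm hS
        have hS' : (⟨m', T ∘ (ι ∘ lm.succAbove),
            red A Val T (ι ∘ lm.succAbove) τ⟩ : DT A Val) ∈ S := by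
          refine Set.mem_of_eq_of_mem ?_ hface
          exact (congrArg (fun μ => (⟨m', T ∘ (ι ∘ lm.succAbove), μ⟩ : DT A Val))
            (red_red A Val T ι lm.succAbove τ)).symm
        have hne : ∀ a, (ι ∘ lm.succAbove) a ≠ i := by
          intro a h
          exact Fin.succAbove_ne lm a (hι.injective (h.trans hlm.symm))
        have hrange : i.succAbove k ∈ Set.range (ι ∘ lm.succAbove) := by
          have hlne : l ≠ lm := by
            intro h
            exact Fin.succAbove_ne i k (by rw [← hl, h, hlm])
          obtain ⟨a, ha⟩ := Fin.exists_succAbove_eq hlne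
          exact ⟨a, by simp only [Function.comp_apply, ha, hl]⟩
        exact face_factor A Val S T τ i (ι ∘ lm.succAbove)
          (hι.comp (Fin.strictMono_succAbove lm)) hne hS' k hrange
    · push_neg at hi
      exact face_factor A Val S T τ i ι hι hi hS k ⟨l, hl⟩
  · -- closed under degeneracies
    intro n T τ i hmem k
    obtain ⟨m, ι, hι, ⟨l, hl⟩, hS⟩ := hmem (i.predAbove k)
    obtain ⟨σ, hσmono, hsec, hσk⟩ :
        ∃ σ : Fin n → Fin (n+1), StrictMono σ ∧ (∀ j, i.predAbove (σ j) = j) ∧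
          σ (i.predAbove k) = k := by
      by_cases hk : k = Fin.castSucc i
      · refine ⟨i.succ.succAbove, Fin.strictMono_succAbove _,
          predAbove_succ_succAbove i, ?_⟩
        subst hk
        rw [Fin.predAbove_castSucc_of_le i i le_rfl]
        exact Fin.succAbove_of_castSucc_lt i.succ i Fin.castSucc_lt_succ
      · exact ⟨(Fin.castSucc i).succAbove, Fin.strictMono_succAbove _,
          Fin.predAbove_succAbove i, Fin.succAbove_predAbove hk⟩
    refine ⟨m, σ ∘ ι, hσmono.comp hι,
      ⟨l, by simp only [Function.comp_apply, hl]; exact hσk⟩, ?_⟩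
    refine Set.mem_of_eq_of_mem ?_ hS
    have e1 := congrArg (fun μ => (⟨m, (T ∘ i.predAbove) ∘ (σ ∘ ι), μ⟩ : DT A Val))
      (red_red A Val T i.predAbove (σ ∘ ι) τ)
    have hcomp : i.predAbove ∘ (σ ∘ ι) = ι := funext fun a => by
      simp only [Function.comp_apply, hsec]
    exact e1.trans (dt_congr A Val T (i.predAbove ∘ (σ ∘ ι)) ι hcomp τ)
  · -- strong join condition
    intro n0 n01 n02 n012 ι01 ι02 _ _ M T012 τ01 τ02 hm01 hm02 _ τ012 h1 h2
    intro i
    have hcov : i ∈ Set.range M.μ01 ∪ Set.range M.μ02 := by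
      rw [M.cover]; exact Set.mem_univ i
    rcases hcov with ⟨j, hj⟩ | ⟨j, hj⟩
    · obtain ⟨m, ι, hι, ⟨l, hl⟩, hS⟩ := hm01 j
      subst h1
      refine ⟨m, M.μ01 ∘ ι, M.mono01.comp hι,
        ⟨l, by simp only [Function.comp_apply, hl, hj]⟩, ?_⟩
      refine Set.mem_of_eq_of_mem ?_ hS
      exact (congrArg (fun μ => (⟨m, (T012 ∘ M.μ01) ∘ ι, μ⟩ : DT A Val))
        (red_red A Val T012 M.μ01 ι τ012)).symm
    · obtain ⟨m, ι, hι, ⟨l, hl⟩, hS⟩ := hm02 j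
      subst h2
      refine ⟨m, M.μ02 ∘ ι, M.mono02.comp hι,
        ⟨l, by simp only [Function.comp_apply, hl, hj]⟩, ?_⟩
      refine Set.mem_of_eq_of_mem ?_ hS
      exact (congrArg (fun μ => (⟨m, (T012 ∘ M.μ02) ∘ ι, μ⟩ : DT A Val))
        (red_red A Val T012 M.μ02 ι τ012)).symm
end
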